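/- If every vertex of a finite simple graph H has degree at least d ≥ 2, and H has girth at least 2δ+1, then H contains at least 1 + d·∑_{i=0}^{δ-1} (d-1)^i ≥ (d-1)^δ vertices. -/

import Mathlib

section MooreBound
open SimpleGraph Walk


lemma exists_cycle_of_two_paths {V : Type*} {H : SimpleGraph V} [DecidableEq V] :
    ∀ (n : ℕ) {a b : V} (p q : H.Walk a b), 2 * p.length + q.length ≤ n →
      p.IsPath → q.IsPath → p ≠ q →
      ∃ (x : V) (c : H.Walk x x), c.IsCycle ∧ c.length ≤ p.length + q.length := by
  intro n
  induction n with
  | zero =>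
    intro a b p q hn hp hq hne
    have hp0 : p.length = 0 := by omega
    have hq0 : q.length = 0 := by omega
    have hab : a = b := Walk.eq_of_length_eq_zero hp0
    subst hab
    rw [Walk.length_eq_zero_iff] at hp0 hq0
    exact absurd (hp0.eq_nil.trans hq0.eq_nil.symm) hne
  | succ n ih =>
    intro a b p q hn hp hq hne
    cases p with
    | nil =>
      rw [Walk.isPath_iff_eq_nil] at hq
      exact absurd hq.symm hne
    | @cons _ x _ h₁ p' =>
      cases q with
      | nil =>
        rw [Walk.isPath_iff_eq_nil] at hp
        exact absurd hp hne
      | @cons _ y _ h₂ q' =>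
        rw [Walk.cons_isPath_iff] at hp hq
        by_cases hxy : x = y
        · subst hxy
          have hne' : p' ≠ q' := fun h => hne (by rw [h])
          obtain ⟨z, c, hc, hlen⟩ := ih p' q' (by simp at hn ⊢; omega) hp.1 hq.1 hne'
          exact ⟨z, c, hc, by simp; omega⟩
        · by_cases hxq : x ∈ (Walk.cons h₂ q').support
          · set t := (Walk.cons h₂ q').takeUntil x hxq with ht_def
            have ht : t.IsPath := (Walk.cons_isPath_iff h₂ q' |>.2 hq).takeUntil hxq
            have hedge : s(a, x) ∉ t.edges := by
              intro hmem
              have h2 := Walk.edges_takeUntil_subset _ hxq hmem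
              rw [Walk.edges_cons, List.mem_cons] at h2
              rcases h2 with h2 | h2
              · rw [Sym2.eq_iff] at h2
                rcases h2 with ⟨-, h2⟩ | ⟨h2, -⟩
                · exact hxy h2
                · exact (H.ne_of_adj h₂) h2
              · exact hq.2 (Walk.fst_mem_support_of_mem_edges _ h2)
            refine ⟨a, Walk.cons h₁ t.reverse, ?_, ?_⟩
            · rw [Walk.cons_isCycle_iff]
              refine ⟨ht.reverse, ?_⟩
              rw [Walk.edges_reverse, List.mem_reverse]
              exact hedge
            · have hlt : t.length ≤ (Walk.cons h₂ q').length :=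
                Walk.length_takeUntil_le _ hxq
              simp only [Walk.length_cons, Walk.length_reverse] at *
              omega
          · by_cases hyp : y ∈ (Walk.cons h₁ p').support
            · set t := (Walk.cons h₁ p').takeUntil y hyp with ht_def
              have ht : t.IsPath := (Walk.cons_isPath_iff h₁ p' |>.2 hp).takeUntil hyp
              have hedge : s(a, y) ∉ t.edges := by
                intro hmem
                have h2 := Walk.edges_takeUntil_subset _ hyp hmem
                rw [Walk.edges_cons, List.mem_cons] at h2
                rcases h2 with h2 | h2
                · rw [Sym2.eq_iff] at h2
                  rcases h2 with ⟨-, h2⟩ | ⟨h2, -⟩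
                  · exact hxy h2.symm
                  · exact (H.ne_of_adj h₁) h2
                · exact hp.2 (Walk.fst_mem_support_of_mem_edges _ h2)
              refine ⟨a, Walk.cons h₂ t.reverse, ?_, ?_⟩
              · rw [Walk.cons_isCycle_iff]
                refine ⟨ht.reverse, ?_⟩
                rw [Walk.edges_reverse, List.mem_reverse]
                exact hedge
              · have hlt : t.length ≤ (Walk.cons h₁ p').length :=
                  Walk.length_takeUntil_le _ hyp
                simp only [Walk.length_cons, Walk.length_reverse] at *
                omega
            · have hq2 : (Walk.cons h₁.symm (Walk.cons h₂ q')).IsPath := by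
                rw [Walk.cons_isPath_iff]
                exact ⟨Walk.cons_isPath_iff h₂ q' |>.2 hq, hxq⟩
              have hne2 : p' ≠ Walk.cons h₁.symm (Walk.cons h₂ q') := by
                intro hcontra
                apply hp.2
                rw [hcontra]
                simp
              obtain ⟨z, c, hc, hlen⟩ := ih p' (Walk.cons h₁.symm (Walk.cons h₂ q'))
                (by simp at hn ⊢; omega) hp.1 hq2 hne2
              exact ⟨z, c, hc, by simp at hlen ⊢; omega⟩

lemma girth_path_unique {V : Type*} {H : SimpleGraph V} [DecidableEq V] {δ : ℕ}
    (hgirth : (2 * δ + 1 : ℕ∞) ≤ H.egirth) {a b : V} (p q : H.Walk a b)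
    (hp : p.IsPath) (hq : q.IsPath) (hlp : p.length ≤ δ) (hlq : q.length ≤ δ) : p = q := by
  by_contra hne
  obtain ⟨x, c, hc, hlen⟩ := exists_cycle_of_two_paths (2 * p.length + q.length) p q le_rfl
    hp hq hne
  have h1 : (2 * δ + 1 : ℕ∞) ≤ c.length := le_egirth.mp hgirth x c hc
  have h2 : 2 * δ + 1 ≤ c.length := by exact_mod_cast h1
  omega

lemma key_no_two_neighbors {V : Type*} {H : SimpleGraph V} [DecidableEq V] {δ : ℕ}
    (hgirth : (2 * δ + 1 : ℕ∞) ≤ H.egirth) {v₀ u w₁ w₂ : V}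
    (h₁ : H.Adj u w₁) (h₂ : H.Adj u w₂) (hw : w₁ ≠ w₂)
    (hr₁ : H.Reachable v₀ w₁) (hr₂ : H.Reachable v₀ w₂)
    (hle₁ : H.dist v₀ w₁ ≤ H.dist v₀ u) (hle₂ : H.dist v₀ w₂ ≤ H.dist v₀ u)
    (hδ₁ : H.dist v₀ w₁ + 1 ≤ δ) (hδ₂ : H.dist v₀ w₂ + 1 ≤ δ) : False := by
  obtain ⟨p₁, hp₁, hl₁⟩ := hr₁.exists_path_of_dist
  obtain ⟨p₂, hp₂, hl₂⟩ := hr₂.exists_path_of_dist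
  have hu₁ : u ∉ p₁.support := by
    intro hu
    have hd : H.dist v₀ u ≤ (p₁.takeUntil u hu).length := H.dist_le _
    have hsp : (p₁.takeUntil u hu).length + (p₁.dropUntil u hu).length = p₁.length := by
      have := p₁.take_spec hu
      calc (p₁.takeUntil u hu).length + (p₁.dropUntil u hu).length
          = ((p₁.takeUntil u hu).append (p₁.dropUntil u hu)).length :=
            (Walk.length_append _ _).symm
        _ = p₁.length := by rw [this]
    have h0 : (p₁.dropUntil u hu).length = 0 := by omega
    exact H.ne_of_adj h₁ (Walk.eq_of_length_eq_zero h0)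
  have hu₂ : u ∉ p₂.support := by
    intro hu
    have hd : H.dist v₀ u ≤ (p₂.takeUntil u hu).length := H.dist_le _
    have hsp : (p₂.takeUntil u hu).length + (p₂.dropUntil u hu).length = p₂.length := by
      have := p₂.take_spec hu
      calc (p₂.takeUntil u hu).length + (p₂.dropUntil u hu).length
          = ((p₂.takeUntil u hu).append (p₂.dropUntil u hu)).length :=
            (Walk.length_append _ _).symm
        _ = p₂.length := by rw [this]
    have h0 : (p₂.dropUntil u hu).length = 0 := by omega
    exact H.ne_of_adj h₂ (Walk.eq_of_length_eq_zero h0)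
  have hR₁ : (Walk.cons h₁ p₁.reverse).IsPath := by
    rw [Walk.cons_isPath_iff]
    exact ⟨hp₁.reverse, by rwa [Walk.support_reverse, List.mem_reverse]⟩
  have hR₂ : (Walk.cons h₂ p₂.reverse).IsPath := by
    rw [Walk.cons_isPath_iff]
    exact ⟨hp₂.reverse, by rwa [Walk.support_reverse, List.mem_reverse]⟩
  have heq := girth_path_unique hgirth (Walk.cons h₁ p₁.reverse) (Walk.cons h₂ p₂.reverse)
    hR₁ hR₂ (by simp [hl₁]; omega) (by simp [hl₂]; omega)
  apply hw
  have g1 : (Walk.cons h₁ p₁.reverse).getVert 1 = w₁ := (Walk.getVert_cons_succ (n := 0) _ h₁).trans (Walk.getVert_zero _)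
  have g2 : (Walk.cons h₂ p₂.reverse).getVert 1 = w₂ := (Walk.getVert_cons_succ (n := 0) _ h₂).trans (Walk.getVert_zero _)
  rw [← g1, ← g2, heq]

/-- If every vertex of a finite simple graph `H` has degree at least `d ≥ 2`,
and `H` has girth at least `2δ+1`, then `H` contains at least
`1 + d·∑_{i=0}^{δ-1} (d-1)^i ≥ (d-1)^δ` vertices. -/
theorem min_degree_girth_lower_bound {V : Type*} [Fintype V] [Nonempty V]
    (H : SimpleGraph V) [DecidableRel H.Adj] (d δ : ℕ)
    (hd : 2 ≤ d) (hδ : 1 ≤ δ)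
    (hdeg : ∀ v : V, d ≤ H.degree v)
    (hgirth : (2 * δ + 1 : ℕ∞) ≤ H.egirth) :
    1 + d * ∑ i ∈ Finset.range δ, (d - 1) ^ i ≤ Fintype.card V ∧
      (d - 1) ^ δ ≤ 1 + d * ∑ i ∈ Finset.range δ, (d - 1) ^ i := by
  classical
  constructor
  · obtain ⟨v₀⟩ := (inferInstance : Nonempty V)
    set L : ℕ → Finset V :=
      fun i => Finset.univ.filter (fun v => H.Reachable v₀ v ∧ H.dist v₀ v = i) with hL
    have hmemL : ∀ i v, v ∈ L i ↔ H.Reachable v₀ v ∧ H.dist v₀ v = i := by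
      intro i v; simp [hL]
    have hdist_adj : ∀ u w, H.Reachable v₀ u → H.Adj u w →
        H.dist v₀ w ≤ H.dist v₀ u + 1 := by
      intro u w hr hadj
      obtain ⟨p, hp⟩ := hr.exists_walk_length_eq_dist
      have := H.dist_le (p.concat hadj)
      rwa [Walk.length_concat, hp] at this
    have hL0 : (L 0).card = 1 := by
      have : L 0 = {v₀} := by
        ext v
        rw [hmemL, Finset.mem_singleton]
        constructor
        · rintro ⟨hr, hd0⟩
          exact ((hr).dist_eq_zero_iff.mp hd0).symm
        · rintro rfl
          exact ⟨SimpleGraph.Reachable.refl _, SimpleGraph.dist_self⟩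
      rw [this, Finset.card_singleton]
    have hL1 : d ≤ (L 1).card := by
      have hsub : H.neighborFinset v₀ ⊆ L 1 := by
        intro w hw
        rw [SimpleGraph.mem_neighborFinset] at hw
        rw [hmemL]
        exact ⟨hw.reachable, SimpleGraph.dist_eq_one_iff_adj.mpr hw⟩
      calc d ≤ H.degree v₀ := hdeg v₀
        _ = (H.neighborFinset v₀).card := rfl
        _ ≤ (L 1).card := Finset.card_le_card hsub
    have hstep : ∀ i, 1 ≤ i → i + 1 ≤ δ → (d - 1) * (L i).card ≤ (L (i + 1)).card := by
      intro i hi1 hiδ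
      set N : V → Finset V :=
        fun u => (H.neighborFinset u).filter (fun w => w ∈ L (i + 1)) with hN
      have hNcard : ∀ u ∈ L i, d - 1 ≤ (N u).card := by
        intro u hu
        obtain ⟨hru, hdu⟩ := (hmemL _ _).mp hu
        set B := (H.neighborFinset u).filter (fun w => H.dist v₀ w ≤ i) with hB
        have hB1 : B.card ≤ 1 := by
          rw [Finset.card_le_one]
          intro w₁ hw₁ w₂ hw₂
          by_contra hne
          rw [hB, Finset.mem_filter, SimpleGraph.mem_neighborFinset] at hw₁ hw₂
          obtain ⟨ha₁, hd₁⟩ := hw₁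
          obtain ⟨ha₂, hd₂⟩ := hw₂
          exact key_no_two_neighbors hgirth ha₁ ha₂ hne (hru.trans ha₁.reachable)
            (hru.trans ha₂.reachable) (by omega) (by omega) (by omega) (by omega)
        have hsub2 : H.neighborFinset u \ B ⊆ N u := by
          intro w hw
          rw [Finset.mem_sdiff] at hw
          obtain ⟨hw1, hw2⟩ := hw
          rw [hB, Finset.mem_filter] at hw2
          push_neg at hw2
          have hadj : H.Adj u w := SimpleGraph.mem_neighborFinset .. |>.mp hw1
          have h3 : H.dist v₀ w ≤ i + 1 := hdist_adj u w hru hadj |>.trans (by omega)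
          have h4 : i + 1 ≤ H.dist v₀ w := hw2 hw1
          rw [hN, Finset.mem_filter]
          exact ⟨hw1, (hmemL _ _).mpr ⟨hru.trans hadj.reachable, by omega⟩⟩
        have h7 := Finset.card_le_card hsub2
        have h5 := Finset.le_card_sdiff B (H.neighborFinset u)
        have h6 : d ≤ (H.neighborFinset u).card := hdeg u
        omega
      have hdisjN : ∀ u₁ ∈ L i, ∀ u₂ ∈ L i, u₁ ≠ u₂ → Disjoint (N u₁) (N u₂) := by
        intro u₁ hu₁ u₂ hu₂ hne
        rw [Finset.disjoint_left]
        intro w hw1 hw2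
        rw [hN, Finset.mem_filter, SimpleGraph.mem_neighborFinset] at hw1 hw2
        obtain ⟨hru₁, hdu₁⟩ := (hmemL _ _).mp hu₁
        obtain ⟨hru₂, hdu₂⟩ := (hmemL _ _).mp hu₂
        obtain ⟨hwr, hwd⟩ := (hmemL _ _).mp hw1.2
        exact key_no_two_neighbors hgirth hw1.1.symm hw2.1.symm hne hru₁ hru₂
          (by omega) (by omega) (by omega) (by omega)
      calc (d - 1) * (L i).card = ∑ _u ∈ L i, (d - 1) := by
            rw [Finset.sum_const, smul_eq_mul, mul_comm]
        _ ≤ ∑ u ∈ L i, (N u).card := Finset.sum_le_sum hNcard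
        _ = ((L i).biUnion N).card := (Finset.card_biUnion hdisjN).symm
        _ ≤ (L (i + 1)).card := by
            apply Finset.card_le_card
            intro w hw
            rw [Finset.mem_biUnion] at hw
            obtain ⟨u, _, hw⟩ := hw
            exact (Finset.mem_filter.mp hw).2
    have hpow : ∀ i, i < δ → d * (d - 1) ^ i ≤ (L (i + 1)).card := by
      intro i
      induction i with
      | zero => intro _; simpa using hL1
      | succ k ihk =>
        intro hk
        have h1 := ihk (by omega)
        have h2 := hstep (k + 1) (by omega) (by omega)
        calc d * (d - 1) ^ (k + 1) = (d - 1) * (d * (d - 1) ^ k) := by ring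
          _ ≤ (d - 1) * (L (k + 1)).card := Nat.mul_le_mul_left _ h1
          _ ≤ (L (k + 2)).card := h2
    have hdisj : ∀ i ∈ Finset.range (δ + 1), ∀ j ∈ Finset.range (δ + 1),
        i ≠ j → Disjoint (L i) (L j) := by
      intro i _ j _ hij
      rw [Finset.disjoint_left]
      intro v hv1 hv2
      obtain ⟨-, h1⟩ := (hmemL _ _).mp hv1
      obtain ⟨-, h2⟩ := (hmemL _ _).mp hv2
      omega
    calc 1 + d * ∑ i ∈ Finset.range δ, (d - 1) ^ i
        = 1 + ∑ i ∈ Finset.range δ, d * (d - 1) ^ i := by rw [Finset.mul_sum]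
      _ ≤ (L 0).card + ∑ i ∈ Finset.range δ, (L (i + 1)).card := by
          exact Nat.add_le_add (by omega)
            (Finset.sum_le_sum fun i hi => hpow i (Finset.mem_range.mp hi))
      _ = ∑ i ∈ Finset.range (δ + 1), (L i).card := by
          rw [Finset.sum_range_succ', add_comm]
      _ = ((Finset.range (δ + 1)).biUnion L).card := (Finset.card_biUnion hdisj).symm
      _ ≤ Fintype.card V := by
          rw [← Finset.card_univ]
          exact Finset.card_le_card (Finset.subset_univ _)
  · have h1 : (d - 1) ^ (δ - 1) ≤ ∑ i ∈ Finset.range δ, (d - 1) ^ i :=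
      Finset.single_le_sum (f := fun i => (d - 1) ^ i) (fun _ _ => Nat.zero_le _)
        (Finset.mem_range.mpr (by omega))
    have h2 : (d - 1) ^ δ = (d - 1) * (d - 1) ^ (δ - 1) := by
      conv_lhs => rw [← Nat.succ_pred_eq_of_pos hδ]
      rw [pow_succ, Nat.pred_eq_sub_one, mul_comm]
    calc (d - 1) ^ δ = (d - 1) * (d - 1) ^ (δ - 1) := h2
      _ ≤ d * ∑ i ∈ Finset.range δ, (d - 1) ^ i := Nat.mul_le_mul (by omega) h1
      _ ≤ 1 + d * ∑ i ∈ Finset.range δ, (d - 1) ^ i := Nat.le_add_left _ _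

end MooreBound
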